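/- arXiv:1001.5127 — 5 statements merged into one kernel-verified Lean document; each statement's English description precedes it below -/
import Mathlib

section
/- With the same hypotheses (S(a,b) = (b^a, a_b) satisfies S_1 S_2 S_1 = S_2 S_1 S_2), for all a, b, c ∈ X one has ((a^b)_{c^{b_a}}) = ((a_c)^{b_{c^a}}). -/
/-- `S × id` on `X × X × X`. -/
def switchL {X : Type*} (S : X × X → X × X) : X × X × X → X × X × X :=
  fun p => ((S (p.1, p.2.1)).1, (S (p.1, p.2.1)).2, p.2.2)

/-- `id × S` on `X × X × X`. -/
def switchR {X : Type*} (S : X × X → X × X) : X × X × X → X × X × X :=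
  fun p => (p.1, S (p.2.1, p.2.2))

theorem stmt_1 {X : Type*} (up dn : X → X → X)
    (S : X × X → X × X) (hS : ∀ a b : X, S (a, b) = (up b a, dn a b))
    (hYB : ∀ p : X × X × X, switchL S (switchR S (switchL S p))
        = switchR S (switchL S (switchR S p))) :
    ∀ a b c : X, dn (up a b) (up c (dn b a)) = up (dn a c) (dn b (up c a)) := by
  intro a b c
  have h := hYB (b, a, c)
  simp [switchL, switchR, hS] at h
  exact h.2.1
end

section
/- Let H be the quaternion algebra over the reals and X a left H-module. Define a^b = j·a + (1+i)·b and a_b = −j·a + (1+i)·b, and S(a,b) = (b^a, a_b). Then S satisfies the set-theoretic Yang–Baxter equation S_1 S_2 S_1 = S_2 S_1 S_2. -/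
theorem stmt_6 {X : Type*} [AddCommGroup X] [Module (Quaternion ℝ) X]
    (i j : Quaternion ℝ) (hi : i = ⟨0, 1, 0, 0⟩) (hj : j = ⟨0, 0, 1, 0⟩)
    (up dn : X → X → X)
    (hup : ∀ a b : X, up a b = j • a + (1 + i) • b)
    (hdn : ∀ a b : X, dn a b = -(j • a) + (1 + i) • b)
    (S : X × X → X × X) (hS : ∀ a b : X, S (a, b) = (up b a, dn a b)) :
    ∀ p : X × X × X, switchL S (switchR S (switchL S p))
        = switchR S (switchL S (switchR S p)) := by
  rintro ⟨a, b, c⟩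
  simp only [switchL, switchR, hS, hup, hdn, Prod.mk.injEq]
  refine ⟨?_, ?_, ?_⟩ <;>
  · match_scalars
    all_goals ext
    all_goals simp only [Quaternion.re_mul, Quaternion.imI_mul, Quaternion.imJ_mul, Quaternion.imK_mul, Quaternion.re_add, Quaternion.imI_add, Quaternion.imJ_add, Quaternion.imK_add, Quaternion.re_neg, Quaternion.imI_neg, Quaternion.imJ_neg, Quaternion.imK_neg, Quaternion.re_one, Quaternion.imI_one, Quaternion.imJ_one, Quaternion.imK_one]
    all_goals simp only [hi, hj]
    all_goals norm_num
end

section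
/- Let G be a group and define S : G × G → G × G by S(a,b) = (a²b, b⁻¹a⁻¹b) (the Wada switch). Then S satisfies the set-theoretic Yang–Baxter equation S_1 S_2 S_1 = S_2 S_1 S_2. -/
theorem stmt_7 {G : Type*} [Group G]
    (S : G × G → G × G) (hS : ∀ a b : G, S (a, b) = (a * a * b, b⁻¹ * a⁻¹ * b)) :
    ∀ p : G × G × G, switchL S (switchR S (switchL S p))
        = switchR S (switchL S (switchR S p)) := by
  rintro ⟨a, b, c⟩
  simp only [switchL, switchR, hS]
  refine Prod.ext ?_ (Prod.ext ?_ ?_) <;> group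
end

section
/- Let G be a group equipped with two commuting automorphisms x, y (i.e. a ℤ²-action, writing a·x and a·y). Define S(a,b) = (b·y, (b·xy)⁻¹(a·x)b). Then S satisfies the set-theoretic Yang–Baxter equation S_1 S_2 S_1 = S_2 S_1 S_2. -/
theorem stmt_9 {G : Type*} [Group G] (φ ψ : G ≃* G)
    (hcomm : ∀ a : G, φ (ψ a) = ψ (φ a))
    (S : G × G → G × G)
    (hS : ∀ a b : G, S (a, b) = (ψ b, (φ (ψ b))⁻¹ * φ a * b)) :
    ∀ p : G × G × G, switchL S (switchR S (switchL S p))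
        = switchR S (switchL S (switchR S p)) := by
  rintro ⟨a, b, c⟩
  simp only [switchL, switchR, hS]
  refine Prod.ext ?_ (Prod.ext ?_ ?_) <;>
    simp [hcomm, map_mul, map_inv, mul_assoc]
end

section
/- Let S(a,b) = (b^a, a_b) be a switch on X and T the twist T(a,b) = (b,a). Then the mixed relation T_1 S_2 S_1 = S_2 S_1 T_2 on X³ holds if and only if for all a,b,c ∈ X: a_{b c} = a_{c b} (i.e. (a_b)_c = (a_c)_b) and a^{b_c} = a^b. -/
theorem stmt_11 {X : Type*} (up dn : X → X → X)
    (S : X × X → X × X) (hS : ∀ a b : X, S (a, b) = (up b a, dn a b))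
    (T : X × X → X × X) (hT : ∀ a b : X, T (a, b) = (b, a)) :
    (∀ p : X × X × X,
        switchL T (switchR S (switchL S p)) = switchR S (switchL S (switchR T p)))
      ↔ ((∀ a b c : X, dn (dn a b) c = dn (dn a c) b) ∧
         (∀ a b c : X, up a (dn b c) = up a b)) := by
  constructor
  · intro h
    constructor
    · intro a b c
      have := h (a, b, c)
      simp [switchL, switchR, hS, hT, Prod.ext_iff] at this
      exact this.2.2
    · intro a b c
      have := h (b, c, a)
      simp [switchL, switchR, hS, hT, Prod.ext_iff] at this
      exact this.1
  · rintro ⟨h1, h2⟩ ⟨a, b, c⟩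
    simp [switchL, switchR, hS, hT, Prod.ext_iff]
    exact ⟨h2 c a b, (h2 b a c).symm, h1 a b c⟩
end
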